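/- The quantum W1 norm is superadditive with respect to the bipartition of the qudits: for any X ∈ O_{m+n}^T (a traceless self-adjoint operator on (ℂ^d)^{⊗(m+n)}), one has ‖X‖_{W1} ≥ ‖Tr_{m+1,…,m+n} X‖_{W1} + ‖Tr_{1,…,m} X‖_{W1}, where Tr_{m+1,…,m+n} and Tr_{1,…,m} denote the partial traces over the last n and the first m qudits respectively; in particular, for any quantum states ρ, σ ∈ S_{m+n}, ‖ρ − σ‖_{W1} ≥ ‖ρ_{1…m} − σ_{1…m}‖_{W1} + ‖ρ_{m+1…m+n} − σ_{m+1…m+n}‖_{W1}. -/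

import Mathlib

open scoped BigOperators
open scoped Classical
open scoped ComplexOrder

noncomputable section

namespace QW1

/-- Configurations of `n` qudits of local dimension `d`:
the index set of the canonical basis of `(ℂ^d)^{⊗ n}`. -/
abbrev Cfg (d n : ℕ) : Type := Fin n → Fin d

/-- Linear operators on the Hilbert space of `n` qudits, represented as matrices
in the canonical basis. -/
abbrev Mat (d n : ℕ) : Type := Matrix (Cfg d n) (Cfg d n) ℂ

/-- The trace norm `‖A‖₁ = Tr √(Aᴴ A)`. -/
noncomputable def traceNorm {ι : Type} [Fintype ι] [DecidableEq ι] (A : Matrix ι ι ℂ) : ℝ :=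
  ((((Matrix.posSemidef_conjTranspose_mul_self A).1.eigenvectorUnitary : Matrix ι ι ℂ) *
    Matrix.diagonal (fun i => ((Real.sqrt ((Matrix.posSemidef_conjTranspose_mul_self A).1.eigenvalues i) : ℝ) : ℂ)) *
    (star ((Matrix.posSemidef_conjTranspose_mul_self A).1.eigenvectorUnitary : Matrix ι ι ℂ))).trace).re

/-- The operator norm `‖A‖_∞`. -/
noncomputable def opNorm {ι : Type} [Fintype ι] [DecidableEq ι] (A : Matrix ι ι ℂ) : ℝ :=
  ‖Matrix.toEuclideanCLM (𝕜 := ℂ) A‖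

/-- Quantum states: positive semidefinite operators with unit trace. -/
def IsState {ι : Type} [Fintype ι] (ρ : Matrix ι ι ℂ) : Prop :=
  ρ.PosSemidef ∧ ρ.trace = 1

/-- Insert the value `s` at position `i` into a configuration `a` of the remaining qudits. -/
def ins {d n : ℕ} (i : Fin n) (a : {j : Fin n // j ≠ i} → Fin d) (s : Fin d) : Cfg d n :=
  fun j => if h : j = i then s else a ⟨j, h⟩

/-- The partial trace over the `i`-th qudit. -/
noncomputable def ptrace {d n : ℕ} (i : Fin n) (X : Mat d n) :
    Matrix ({j : Fin n // j ≠ i} → Fin d) ({j : Fin n // j ≠ i} → Fin d) ℂ :=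
  fun a b => ∑ s : Fin d, X (ins i a s) (ins i b s)

/-- The marginal of `ρ` on the `i`-th qudit (partial trace over all the other qudits). -/
noncomputable def marginal {d n : ℕ} (i : Fin n) (ρ : Mat d n) :
    Matrix (Fin d) (Fin d) ℂ :=
  fun s t => ∑ a : ({j : Fin n // j ≠ i} → Fin d), ρ (ins i a s) (ins i a t)

/-- Combine a configuration `s` of the qudits in `I` with a configuration `a` of the rest. -/
def insSet {d n : ℕ} (I : Finset (Fin n)) (a : {j : Fin n // j ∉ I} → Fin d)
    (s : {j : Fin n // j ∈ I} → Fin d) : Cfg d n :=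
  fun j => if h : j ∈ I then s ⟨j, h⟩ else a ⟨j, h⟩

/-- The partial trace over the qudits in `I`. -/
noncomputable def ptraceSet {d n : ℕ} (I : Finset (Fin n)) (X : Mat d n) :
    Matrix ({j : Fin n // j ∉ I} → Fin d) ({j : Fin n // j ∉ I} → Fin d) ℂ :=
  fun a b => ∑ s : ({j : Fin n // j ∈ I} → Fin d), X (insSet I a s) (insSet I b s)

/-- The set of values `(1/2) ∑ i ‖X⁽ⁱ⁾‖₁` over all decompositions `X = ∑ i X⁽ⁱ⁾` with
`X⁽ⁱ⁾` self-adjoint and `Tr_i X⁽ⁱ⁾ = 0`. -/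
def W1Set {d n : ℕ} (X : Mat d n) : Set ℝ :=
  { r | ∃ Y : Fin n → Mat d n, (∀ i, (Y i).IsHermitian) ∧ (∀ i, ptrace i (Y i) = 0) ∧
      X = ∑ i, Y i ∧ r = (1 / 2) * ∑ i, traceNorm (Y i) }

/-- The quantum `W₁` norm. -/
noncomputable def W1 {d n : ℕ} (X : Mat d n) : ℝ := sInf (W1Set X)

/-- The quantum Lipschitz constant: the dual norm of the quantum `W₁` norm. -/
noncomputable def lipschitz {d n : ℕ} (H : Mat d n) : ℝ :=
  sSup { r | ∃ X : Mat d n, X.IsHermitian ∧ X.trace = 0 ∧ W1 X ≤ 1 ∧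
    r = ((H * X).trace).re }

/-- Extension `Φ ⊗ id_R` of a map on matrices. -/
def extendMap {A B R : Type} [Fintype A] [Fintype B] [Fintype R]
    (Φ : Matrix A A ℂ → Matrix B B ℂ) (M : Matrix (A × R) (A × R) ℂ) :
    Matrix (B × R) (B × R) ℂ :=
  fun p q => Φ (fun a a' => M (a, p.2) (a', q.2)) p.1 q.1

/-- Quantum channels: completely positive trace-preserving linear maps. -/
def IsCPTP {A B : Type} [Fintype A] [Fintype B]
    (Φ : Matrix A A ℂ →ₗ[ℂ] Matrix B B ℂ) : Prop :=
  (∀ (k : ℕ) (M : Matrix (A × Fin k) (A × Fin k) ℂ), M.PosSemidef →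
    (extendMap (fun N => Φ N) M).PosSemidef) ∧
  ∀ M, (Φ M).trace = M.trace

/-- Action `φ_i ⊗ id` of a single-qudit map `φ` on the `i`-th qudit of `n` qudits. -/
def applyAt {d n : ℕ} (i : Fin n) (φ : Matrix (Fin d) (Fin d) ℂ → Matrix (Fin d) (Fin d) ℂ)
    (X : Mat d n) : Mat d n :=
  fun a b => φ (fun s t => X (Function.update a i s) (Function.update b i t)) (a i) (b i)

/-- Action `φ_I ⊗ id` of a map `φ` on the qudits in `I`. -/
def applyOn {d n : ℕ} (I : Finset (Fin n))
    (φ : Matrix ({j : Fin n // j ∈ I} → Fin d) ({j : Fin n // j ∈ I} → Fin d) ℂ →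
         Matrix ({j : Fin n // j ∈ I} → Fin d) ({j : Fin n // j ∈ I} → Fin d) ℂ)
    (X : Mat d n) : Mat d n :=
  fun a b =>
    φ (fun s t => X (insSet I (fun j => a j) s) (insSet I (fun j => b j) t))
      (fun j => a j) (fun j => b j)

/-- The operator obtained from `X` by permuting the tensor factors according to `π`. -/
def permuteMat {d n : ℕ} (π : Equiv.Perm (Fin n)) (X : Mat d n) : Mat d n :=
  fun a b => X (a ∘ π) (b ∘ π)

/-- Tensor product of an operator on the first `m` qudits with one on the last `n` qudits. -/
def tensorMN {d m n : ℕ} (A : Mat d m) (B : Mat d n) : Mat d (m + n) :=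
  fun a b =>
    A (fun i => a (Fin.castAdd n i)) (fun i => b (Fin.castAdd n i)) *
    B (fun j => a (Fin.natAdd m j)) (fun j => b (Fin.natAdd m j))

/-- Partial trace of an operator on `m + n` qudits over the last `n` qudits. -/
noncomputable def ptraceLast {d m n : ℕ} (X : Mat d (m + n)) : Mat d m :=
  fun a b => ∑ k : Cfg d n, X (Fin.append a k) (Fin.append b k)

/-- Partial trace of an operator on `m + n` qudits over the first `m` qudits. -/
noncomputable def ptraceFirst {d m n : ℕ} (X : Mat d (m + n)) : Mat d n :=
  fun a b => ∑ k : Cfg d m, X (Fin.append k a) (Fin.append k b)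

/-- `n`-fold tensor product `σ₁ ⊗ ⋯ ⊗ σₙ` of single-qudit operators. -/
def tensorAll {d n : ℕ} (σs : Fin n → Matrix (Fin d) (Fin d) ℂ) : Mat d n :=
  fun a b => ∏ i, σs i (a i) (b i)

/-- `I_d^{(i)} ⊗ K`: the identity on the `i`-th qudit tensored with an operator `K`
on the remaining qudits. -/
def idTensorAt {d n : ℕ} (i : Fin n)
    (K : Matrix ({j : Fin n // j ≠ i} → Fin d) ({j : Fin n // j ≠ i} → Fin d) ℂ) :
    Mat d n :=
  fun a b => if a i = b i then K (fun j => a j) (fun j => b j) else 0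

/-- `K ⊗ identity`: an operator acting only on the qudits in `I`. -/
def embedOn {d n : ℕ} (I : Finset (Fin n))
    (K : Matrix ({j : Fin n // j ∈ I} → Fin d) ({j : Fin n // j ∈ I} → Fin d) ℂ) :
    Mat d n :=
  fun a b => if (∀ j, j ∉ I → a j = b j) then K (fun j => a j) (fun j => b j) else 0

/-- The `n`-th tensor power `φ^{⊗n}` of a single-qudit linear map `φ`. -/
noncomputable def tensorPowMap {d n : ℕ}
    (φ : Matrix (Fin d) (Fin d) ℂ → Matrix (Fin d) (Fin d) ℂ) (X : Mat d n) : Mat d n :=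
  fun a b => ∑ s : Cfg d n, ∑ t : Cfg d n,
    X s t * ∏ j, φ (Matrix.single (s j) (t j) 1) (a j) (b j)

/-- The `1 → 1` norm of a map on single-qudit operators. -/
noncomputable def norm1to1 {d : ℕ}
    (F : Matrix (Fin d) (Fin d) ℂ → Matrix (Fin d) (Fin d) ℂ) : ℝ :=
  sSup { r | ∃ ρ : Matrix (Fin d) (Fin d) ℂ, IsState ρ ∧ r = traceNorm (F ρ) }

/-- The diamond norm of a map on single-qudit operators. -/
noncomputable def diamondNorm {d : ℕ}
    (F : Matrix (Fin d) (Fin d) ℂ → Matrix (Fin d) (Fin d) ℂ) : ℝ :=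
  sSup { r | ∃ ρ : Matrix (Fin d × Fin d) (Fin d × Fin d) ℂ, IsState ρ ∧
    r = traceNorm (extendMap F ρ) }

/-- The contraction coefficient (`W₁ → W₁` norm) of a map on `n`-qudit operators. -/
noncomputable def W1toW1 {d n : ℕ} (Φ : Mat d n → Mat d n) : ℝ :=
  sSup { r | ∃ X : Mat d n, X.IsHermitian ∧ X.trace = 0 ∧ W1 X ≤ 1 ∧ r = W1 (Φ X) }

/-- The von Neumann entropy `S(ρ) = -Tr[ρ ln ρ]` (natural logarithm). -/
noncomputable def vnEntropy {ι : Type} [Fintype ι] [DecidableEq ι] (ρ : Matrix ι ι ℂ) : ℝ :=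
  if h : ρ.IsHermitian then -∑ i, h.eigenvalues i * Real.log (h.eigenvalues i) else 0

/-- The logarithm of a self-adjoint matrix, via the spectral decomposition. -/
noncomputable def matLog {ι : Type} [Fintype ι] [DecidableEq ι] (ρ : Matrix ι ι ℂ) :
    Matrix ι ι ℂ :=
  if h : ρ.IsHermitian then
    (h.eigenvectorUnitary : Matrix ι ι ℂ) *
      Matrix.diagonal (fun i => (Real.log (h.eigenvalues i) : ℂ)) *
      (star (h.eigenvectorUnitary : Matrix ι ι ℂ))
  else 0

/-- The quantum relative entropy `S(ρ‖σ) = Tr[ρ (ln ρ - ln σ)]`. -/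
noncomputable def relEntropy {ι : Type} [Fintype ι] [DecidableEq ι]
    (ρ σ : Matrix ι ι ℂ) : ℝ :=
  ((ρ * (matLog ρ - matLog σ)).trace).re

/-- The Hamming distance between two configurations. -/
def hamming {d n : ℕ} (x y : Cfg d n) : ℕ :=
  (Finset.univ.filter (fun i => x i ≠ y i)).card

/-- Probability distributions on a finite set. -/
def IsProb {α : Type} [Fintype α] (p : α → ℝ) : Prop :=
  (∀ x, 0 ≤ p x) ∧ ∑ x, p x = 1

/-- Couplings of two probability distributions. -/
def IsCoupling {α : Type} [Fintype α] (π : α × α → ℝ) (p q : α → ℝ) : Prop :=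
  IsProb π ∧ (∀ x, ∑ y, π (x, y) = p x) ∧ (∀ y, ∑ x, π (x, y) = q y)

/-- The classical Wasserstein distance of order 1 with respect to the Hamming distance. -/
noncomputable def classicalW1 {d n : ℕ} (p q : Cfg d n → ℝ) : ℝ :=
  sInf { c | ∃ π : Cfg d n × Cfg d n → ℝ, IsCoupling π p q ∧
    c = ∑ x : Cfg d n, ∑ y : Cfg d n, (hamming x y : ℝ) * π (x, y) }

/-- The Lipschitz constant of a function on `[d]^n` with respect to the Hamming distance. -/
noncomputable def classicalLip {d n : ℕ} (f : Cfg d n → ℝ) : ℝ :=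
  sSup { r | ∃ x y : Cfg d n, x ≠ y ∧ r = |f x - f y| / (hamming x y : ℝ) }


set_option linter.unusedSectionVars false

section AuxA
open Matrix
variable {ι : Type} [Fintype ι] [DecidableEq ι]

lemma psd_diag_re_nonneg {M : Matrix ι ι ℂ} (hM : M.PosSemidef) (j : ι) :
    0 ≤ (M j j).re := by
  exact (Complex.le_def.mp hM.diag_nonneg).1

lemma psd_trace_re_nonneg {M : Matrix ι ι ℂ} (hM : M.PosSemidef) :
    0 ≤ (M.trace).re := by
  rw [Matrix.trace, Complex.re_sum]
  exact Finset.sum_nonneg fun j _ => psd_diag_re_nonneg hM j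

lemma traceNorm_nonneg (A : Matrix ι ι ℂ) : 0 ≤ traceNorm A := by
  have hU : star ((Matrix.posSemidef_conjTranspose_mul_self A).1.eigenvectorUnitary : Matrix ι ι ℂ) *
      ((Matrix.posSemidef_conjTranspose_mul_self A).1.eigenvectorUnitary : Matrix ι ι ℂ) = 1 :=
    Unitary.coe_star_mul_self _
  rw [traceNorm, Matrix.trace_mul_cycle, hU, Matrix.one_mul, Matrix.trace_diagonal, Complex.re_sum]
  exact Finset.sum_nonneg fun i _ => by simp [Real.sqrt_nonneg]

lemma sandwich_mul {U : Matrix ι ι ℂ} (hU : star U * U = 1) (f g : ι → ℂ) :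
    (U * Matrix.diagonal f * star U) * (U * Matrix.diagonal g * star U)
      = U * Matrix.diagonal (fun i => f i * g i) * star U := by
  have h : Matrix.diagonal f * ((star U * U) * Matrix.diagonal g)
      = Matrix.diagonal (fun i => f i * g i) := by
    rw [hU, Matrix.one_mul, Matrix.diagonal_mul_diagonal]
  calc (U * Matrix.diagonal f * star U) * (U * Matrix.diagonal g * star U)
      = U * (Matrix.diagonal f * ((star U * U) * Matrix.diagonal g)) * star U := by
        simp only [Matrix.mul_assoc]
    _ = U * Matrix.diagonal (fun i => f i * g i) * star U := by rw [h]

lemma sandwich_trace {U : Matrix ι ι ℂ} (hU : star U * U = 1) (D : Matrix ι ι ℂ) :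
    (U * D * star U).trace = D.trace := by
  rw [Matrix.trace_mul_cycle, hU, Matrix.one_mul]

lemma traceNorm_eq_sum_abs {A : Matrix ι ι ℂ} (hA : A.IsHermitian) :
    traceNorm A = ∑ i, |hA.eigenvalues i| := by
  set U : Matrix ι ι ℂ := (hA.eigenvectorUnitary : Matrix ι ι ℂ) with hUdef
  have hU1 : star U * U = 1 := Unitary.coe_star_mul_self hA.eigenvectorUnitary
  have hB := (Matrix.posSemidef_conjTranspose_mul_self A).1
  have h1 : traceNorm A = ((hB.cfc Real.sqrt).trace).re := rfl
  have h2 : hB.cfc Real.sqrt = hA.cfc (fun x => |x|) := by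
    rw [← hB.cfc_eq, ← hA.cfc_eq, hA.eq, ← pow_two, ← cfc_pow_id (R := ℝ) A 2 hA.isSelfAdjoint,
      ← cfc_comp Real.sqrt (fun x : ℝ => x ^ 2) A (ha := hA.isSelfAdjoint)]
    congr 1
    funext x
    simp [Real.sqrt_sq_eq_abs]
  rw [h1, h2, Matrix.IsHermitian.cfc, Unitary.conjStarAlgAut_apply, ← hUdef, sandwich_trace hU1,
    Matrix.trace_diagonal, Complex.re_sum]
  simp

lemma traceNorm_sub_le {A B : Matrix ι ι ℂ} (hA : A.PosSemidef) (hB : B.PosSemidef) :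
    traceNorm (A - B) ≤ (A.trace).re + (B.trace).re := by
  have hH : (A - B).IsHermitian := hA.1.sub hB.1
  rw [traceNorm_eq_sum_abs hH]
  set U : Matrix ι ι ℂ := (hH.eigenvectorUnitary : Matrix ι ι ℂ) with hUdef
  have hU2 : U * star U = 1 := Unitary.coe_mul_star_self hH.eigenvectorUnitary
  have hdiag : star U * (A - B) * U
      = Matrix.diagonal (RCLike.ofReal ∘ hH.eigenvalues) :=
    by have h := hH.conjStarAlgAut_star_eigenvectorUnitary
       rw [Unitary.conjStarAlgAut_apply] at h
       simp only [Unitary.coe_star, star_star] at h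
       exact h
  have hApsd : (star U * A * U).PosSemidef := by
    rw [Matrix.star_eq_conjTranspose]
    exact hA.conjTranspose_mul_mul_same U
  have hBpsd : (star U * B * U).PosSemidef := by
    rw [Matrix.star_eq_conjTranspose]
    exact hB.conjTranspose_mul_mul_same U
  have heig : ∀ j, hH.eigenvalues j = ((star U * A * U) j j).re - ((star U * B * U) j j).re := by
    intro j
    have h1 : star U * A * U - star U * B * U
        = Matrix.diagonal (RCLike.ofReal ∘ hH.eigenvalues) := by
      rw [← hdiag, Matrix.mul_sub, Matrix.sub_mul]
    have h3 : ((star U * A * U) j j) - ((star U * B * U) j j)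
        = ((hH.eigenvalues j : ℝ) : ℂ) := by
      have := congrFun (congrFun h1 j) j
      simpa [Matrix.diagonal_apply_eq] using this
    have := congrArg Complex.re h3
    simp only [Complex.sub_re, Complex.ofReal_re] at this
    exact this.symm
  have hsumA : ∑ j, ((star U * A * U) j j).re = (A.trace).re := by
    have h : (star U * A * U).trace = A.trace := by
      rw [Matrix.trace_mul_cycle, hU2, Matrix.one_mul]
    rw [← h, Matrix.trace, Complex.re_sum]; rfl
  have hsumB : ∑ j, ((star U * B * U) j j).re = (B.trace).re := by
    have h : (star U * B * U).trace = B.trace := by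
      rw [Matrix.trace_mul_cycle, hU2, Matrix.one_mul]
    rw [← h, Matrix.trace, Complex.re_sum]; rfl
  calc ∑ j, |hH.eigenvalues j|
      ≤ ∑ j, (((star U * A * U) j j).re + ((star U * B * U) j j).re) := by
        apply Finset.sum_le_sum
        intro j _
        rw [heig j]
        have ha := psd_diag_re_nonneg hApsd j
        have hb := psd_diag_re_nonneg hBpsd j
        rw [abs_sub_le_iff]
        constructor <;> linarith
    _ = (A.trace).re + (B.trace).re := by
        rw [Finset.sum_add_distrib, hsumA, hsumB]

lemma jordan {H : Matrix ι ι ℂ} (hH : H.IsHermitian) :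
    ∃ P N : Matrix ι ι ℂ, P.PosSemidef ∧ N.PosSemidef ∧ H = P - N ∧
      (P.trace).re + (N.trace).re = traceNorm H := by
  set U : Matrix ι ι ℂ := (hH.eigenvectorUnitary : Matrix ι ι ℂ) with hUdef
  have hU1 : star U * U = 1 := Unitary.coe_star_mul_self hH.eigenvectorUnitary
  refine ⟨U * Matrix.diagonal (RCLike.ofReal ∘ fun i => max (hH.eigenvalues i) 0) * star U,
    U * Matrix.diagonal (RCLike.ofReal ∘ fun i => max (-hH.eigenvalues i) 0) * star U,
    ?_, ?_, ?_, ?_⟩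
  · rw [Matrix.star_eq_conjTranspose]
    exact Matrix.PosSemidef.mul_mul_conjTranspose_same
      (Matrix.posSemidef_diagonal_iff.mpr fun i =>
        RCLike.ofReal_nonneg.mpr (le_max_right _ _)) U
  · rw [Matrix.star_eq_conjTranspose]
    exact Matrix.PosSemidef.mul_mul_conjTranspose_same
      (Matrix.posSemidef_diagonal_iff.mpr fun i =>
        RCLike.ofReal_nonneg.mpr (le_max_right _ _)) U
  · rw [show ∀ P N C : Matrix ι ι ℂ, U * P * C - U * N * C = U * (P - N) * C by
      intro P N C; rw [Matrix.mul_sub, Matrix.sub_mul], Matrix.diagonal_sub,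
      show (fun i => (RCLike.ofReal ∘ fun i => max (hH.eigenvalues i) 0) i
          - (RCLike.ofReal ∘ fun i => max (-hH.eigenvalues i) 0) i)
        = (RCLike.ofReal ∘ hH.eigenvalues : ι → ℂ) by
        funext i
        simp only [Function.comp_apply, ← RCLike.ofReal_sub,
          max_zero_sub_max_neg_zero_eq_self]]
    exact hH.spectral_theorem
  · rw [sandwich_trace hU1, sandwich_trace hU1, Matrix.trace_diagonal, Matrix.trace_diagonal,
      traceNorm_eq_sum_abs hH, Complex.re_sum, Complex.re_sum, ← Finset.sum_add_distrib]
    apply Finset.sum_congr rfl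
    intro i _
    simp only [Function.comp_apply, RCLike.ofReal_re]
    rcases le_total (hH.eigenvalues i) 0 with h | h
    · rw [max_eq_right h, max_eq_left (by linarith), abs_of_nonpos h]; simp
    · rw [max_eq_left h, max_eq_right (by linarith), abs_of_nonneg h]; simp

end AuxA

section PT
open Matrix
variable {α β γ : Type} [Fintype α] [Fintype β] [Fintype γ]
  [DecidableEq α] [DecidableEq β] [DecidableEq γ]

/-- Generic partial trace along a product decomposition `e`. -/
def ptE (e : α × β ≃ γ) (M : Matrix γ γ ℂ) : Matrix α α ℂ :=
  fun a b => ∑ k : β, M (e (a, k)) (e (b, k))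

def ptV (e : α × β ≃ γ) (k : β) : Matrix γ α ℂ :=
  fun g a => if e (a, k) = g then 1 else 0

lemma ptE_eq_sum (e : α × β ≃ γ) (M : Matrix γ γ ℂ) :
    ptE e M = ∑ k : β, (ptV e k)ᴴ * M * (ptV e k) := by
  funext a b
  rw [Matrix.sum_apply]
  apply Finset.sum_congr rfl
  intro k _
  simp [Matrix.mul_apply, Matrix.conjTranspose_apply, ptV,
    apply_ite (star : ℂ → ℂ), ite_mul, mul_ite]

lemma ptE_psd {e : α × β ≃ γ} {M : Matrix γ γ ℂ} (hM : M.PosSemidef) :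
    (ptE e M).PosSemidef := by
  rw [ptE_eq_sum]
  exact Finset.sum_induction _ _ (fun a b ha hb => ha.add hb)
    Matrix.PosSemidef.zero (fun k _ => hM.conjTranspose_mul_mul_same (ptV e k))

lemma ptE_herm {e : α × β ≃ γ} {M : Matrix γ γ ℂ} (hM : M.IsHermitian) :
    (ptE e M).IsHermitian := by
  rw [ptE_eq_sum]
  exact Finset.sum_induction _ _ (fun a b ha hb => ha.add hb)
    Matrix.isHermitian_zero (fun k _ => by
      unfold Matrix.IsHermitian
      simp [Matrix.conjTranspose_mul, Matrix.mul_assoc, hM.eq])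

lemma ptE_trace (e : α × β ≃ γ) (M : Matrix γ γ ℂ) :
    (ptE e M).trace = M.trace := by
  rw [Matrix.trace, Matrix.trace, ← Equiv.sum_comp e (fun g => M.diag g),
    Fintype.sum_prod_type]
  rfl

lemma ptE_sub (e : α × β ≃ γ) (M M' : Matrix γ γ ℂ) :
    ptE e (M - M') = ptE e M - ptE e M' := by
  funext a b
  simp [ptE, Finset.sum_sub_distrib]

lemma ptE_sum (e : α × β ≃ γ) {κ : Type*} (s : Finset κ) (f : κ → Matrix γ γ ℂ) :
    ptE e (∑ i ∈ s, f i) = ∑ i ∈ s, ptE e (f i) := by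
  funext a b
  simp [ptE, Matrix.sum_apply]
  rw [Finset.sum_comm]

lemma ptE_traceNorm_le (e : α × β ≃ γ) {M : Matrix γ γ ℂ} (hM : M.IsHermitian) :
    traceNorm (ptE e M) ≤ traceNorm M := by
  obtain ⟨P, N, hP, hN, hPN, htr⟩ := jordan hM
  calc traceNorm (ptE e M) = traceNorm (ptE e P - ptE e N) := by rw [hPN, ptE_sub]
    _ ≤ ((ptE e P).trace).re + ((ptE e N).trace).re := traceNorm_sub_le (ptE_psd hP) (ptE_psd hN)
    _ = (P.trace).re + (N.trace).re := by rw [ptE_trace, ptE_trace]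
    _ = traceNorm M := htr

end PT

section Combin
variable {d m n : ℕ}

def appendEquiv {d m n : ℕ} : (Cfg d m × Cfg d n) ≃ Cfg d (m + n) where
  toFun p := Fin.append p.1 p.2
  invFun c := (fun i => c (Fin.castAdd n i), fun j => c (Fin.natAdd m j))
  left_inv p := by
    refine Prod.ext ?_ ?_ <;> funext i <;> simp [Fin.append_left, Fin.append_right]
  right_inv c := by
    funext j
    induction j using Fin.addCases with
    | left i => simp [Fin.append_left]
    | right i => simp [Fin.append_right]

lemma ptraceLast_eq_ptE (X : Mat d (m + n)) : ptraceLast X = ptE appendEquiv X := rfl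

lemma ptraceFirst_eq_ptE (X : Mat d (m + n)) :
    ptraceFirst X = ptE ((Equiv.prodComm (Cfg d n) (Cfg d m)).trans appendEquiv) X := rfl

def insEquiv {d n : ℕ} [NeZero d] (i : Fin n) :
    ({j : Fin n // j ≠ i} → Fin d) × Fin d ≃ Cfg d n where
  toFun p := ins i p.1 p.2
  invFun k := (fun j' => k j'.1, k i)
  left_inv p := by
    refine Prod.ext ?_ ?_
    · funext j'
      simp [ins, dif_neg j'.2]
    · simp [ins]
  right_inv k := by
    funext j''
    by_cases hj : j'' = i
    · subst hj; simp [ins]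
    · simp [ins, dif_neg hj]

lemma key1 {d m n : ℕ} [NeZero d] (i : Fin m) (c : {j : Fin m // j ≠ i} → Fin d)
    (k : Cfg d n) (s : Fin d) :
    Fin.append (ins i c s) k
      = ins (Fin.castAdd n i) (fun j => Fin.append (ins i c 0) k j.1) s := by
  funext j
  by_cases hj : j = Fin.castAdd n i
  · subst hj
    simp [ins, Fin.append_left]
  · rw [show ins (Fin.castAdd n i) (fun j => Fin.append (ins i c 0) k j.1) s j
        = Fin.append (ins i c 0) k j from dif_neg hj]
    induction j using Fin.addCases with
    | left i' =>
      have hne : i' ≠ i := fun hh => hj (by rw [hh])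
      simp [Fin.append_left, ins, dif_neg hne]
    | right j' => simp [Fin.append_right]

lemma key2 {d m n : ℕ} [NeZero d] (j : Fin n) (k : Cfg d m)
    (c : {j' : Fin n // j' ≠ j} → Fin d) (s : Fin d) :
    Fin.append k (ins j c s)
      = ins (Fin.natAdd m j) (fun j'' => Fin.append k (ins j c 0) j''.1) s := by
  funext j''
  by_cases hj : j'' = Fin.natAdd m j
  · subst hj
    simp [ins, Fin.append_right]
  · rw [show ins (Fin.natAdd m j) (fun j'' => Fin.append k (ins j c 0) j''.1) s j''
        = Fin.append k (ins j c 0) j'' from dif_neg hj]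
    induction j'' using Fin.addCases with
    | left i' => simp [Fin.append_left]
    | right j2 =>
      have hne : j2 ≠ j := fun hh => hj (by rw [hh])
      simp [Fin.append_right, ins, dif_neg hne]

lemma ptrace_zero_ext {d n : ℕ} {i : Fin n} {Y : Mat d n} (h : ptrace i Y = 0) :
    ∀ c c' : {j : Fin n // j ≠ i} → Fin d,
      ∑ s : Fin d, Y (ins i c s) (ins i c' s) = 0 := by
  intro c c'
  have := congrFun (congrFun h c) c'
  simpa [ptrace] using this

lemma ptrace_ptraceLast_zero {d m n : ℕ} [NeZero d] {i : Fin m} {Y : Mat d (m + n)}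
    (h : ptrace (Fin.castAdd n i) Y = 0) : ptrace i (ptraceLast Y) = 0 := by
  funext a b
  show (∑ s : Fin d, ∑ k : Cfg d n,
      Y (Fin.append (ins i a s) k) (Fin.append (ins i b s) k)) = 0
  rw [Finset.sum_comm]
  apply Finset.sum_eq_zero
  intro k _
  calc ∑ s : Fin d, Y (Fin.append (ins i a s) k) (Fin.append (ins i b s) k)
      = ∑ s : Fin d, Y (ins (Fin.castAdd n i) (fun j => Fin.append (ins i a 0) k j.1) s)
          (ins (Fin.castAdd n i) (fun j => Fin.append (ins i b 0) k j.1) s) := by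
        apply Finset.sum_congr rfl
        intro s _
        rw [key1 i a k s, key1 i b k s]
    _ = 0 := ptrace_zero_ext h _ _

lemma ptrace_ptraceFirst_zero {d m n : ℕ} [NeZero d] {j : Fin n} {Y : Mat d (m + n)}
    (h : ptrace (Fin.natAdd m j) Y = 0) : ptrace j (ptraceFirst Y) = 0 := by
  funext a b
  show (∑ s : Fin d, ∑ k : Cfg d m,
      Y (Fin.append k (ins j a s)) (Fin.append k (ins j b s))) = 0
  rw [Finset.sum_comm]
  apply Finset.sum_eq_zero
  intro k _
  calc ∑ s : Fin d, Y (Fin.append k (ins j a s)) (Fin.append k (ins j b s))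
      = ∑ s : Fin d, Y (ins (Fin.natAdd m j) (fun j'' => Fin.append k (ins j a 0) j''.1) s)
          (ins (Fin.natAdd m j) (fun j'' => Fin.append k (ins j b 0) j''.1) s) := by
        apply Finset.sum_congr rfl
        intro s _
        rw [key2 j k a s, key2 j k b s]
    _ = 0 := ptrace_zero_ext h _ _

lemma ptraceLast_zero {d m n : ℕ} [NeZero d] {j : Fin n} {Y : Mat d (m + n)}
    (h : ptrace (Fin.natAdd m j) Y = 0) : ptraceLast Y = 0 := by
  funext a b
  show (∑ k : Cfg d n, Y (Fin.append a k) (Fin.append b k)) = 0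
  rw [← Equiv.sum_comp (insEquiv j) (fun k => Y (Fin.append a k) (Fin.append b k)),
    Fintype.sum_prod_type]
  apply Finset.sum_eq_zero
  intro rest _
  calc ∑ s : Fin d, Y (Fin.append a (ins j rest s)) (Fin.append b (ins j rest s))
      = ∑ s : Fin d, Y (ins (Fin.natAdd m j) (fun j'' => Fin.append a (ins j rest 0) j''.1) s)
          (ins (Fin.natAdd m j) (fun j'' => Fin.append b (ins j rest 0) j''.1) s) := by
        apply Finset.sum_congr rfl
        intro s _
        rw [key2 j a rest s, key2 j b rest s]
    _ = 0 := ptrace_zero_ext h _ _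

lemma ptraceFirst_zero {d m n : ℕ} [NeZero d] {i : Fin m} {Y : Mat d (m + n)}
    (h : ptrace (Fin.castAdd n i) Y = 0) : ptraceFirst Y = 0 := by
  funext a b
  show (∑ k : Cfg d m, Y (Fin.append k a) (Fin.append k b)) = 0
  rw [← Equiv.sum_comp (insEquiv i) (fun k => Y (Fin.append k a) (Fin.append k b)),
    Fintype.sum_prod_type]
  apply Finset.sum_eq_zero
  intro rest _
  calc ∑ s : Fin d, Y (Fin.append (ins i rest s) a) (Fin.append (ins i rest s) b)
      = ∑ s : Fin d, Y (ins (Fin.castAdd n i) (fun j => Fin.append (ins i rest 0) a j.1) s)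
          (ins (Fin.castAdd n i) (fun j => Fin.append (ins i rest 0) b j.1) s) := by
        apply Finset.sum_congr rfl
        intro s _
        rw [key1 i rest a s, key1 i rest b s]
    _ = 0 := ptrace_zero_ext h _ _

end Combin

section Zm
variable {d N : ℕ}

def mrg {d N : ℕ} (k : ℕ) (s a : Cfg d N) : Cfg d N :=
  fun j => if (j : ℕ) < k then s j else a j

noncomputable def Zm {d N : ℕ} (X : Mat d N) (k : ℕ) : Mat d N :=
  fun a b => ((d : ℂ) ^ N)⁻¹ *
    (if ∀ j : Fin N, (j : ℕ) < k → a j = b j then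
      ∑ s : Cfg d N, X (mrg k s a) (mrg k s b) else 0)

lemma Zm_zero (hd : d ≠ 0) (X : Mat d N) : Zm X 0 = X := by
  funext a b
  have hpos : ∀ j : Fin N, (j : ℕ) < 0 → a j = b j := fun j hj => absurd hj (Nat.not_lt_zero _)
  have hmrg : ∀ (c : Cfg d N) (s : Cfg d N), mrg 0 s c = c := by
    intro c s; funext j; simp [mrg]
  rw [Zm, if_pos hpos]
  rw [Finset.sum_congr rfl fun s _ => by rw [hmrg a s, hmrg b s]]
  rw [Finset.sum_const, Finset.card_univ]
  have hcard : Fintype.card (Cfg d N) = d ^ N := by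
    simp [Fintype.card_fun]
  rw [hcard, nsmul_eq_mul, Nat.cast_pow, ← mul_assoc,
    inv_mul_cancel₀ (pow_ne_zero _ (Nat.cast_ne_zero.mpr hd)), one_mul]

lemma Zm_top {X : Mat d N} (htr : X.trace = 0) : Zm X N = 0 := by
  funext a b
  have hmrg : ∀ (c : Cfg d N) (s : Cfg d N), mrg N s c = s := by
    intro c s; funext j; simp [mrg, j.isLt]
  have hsum : ∀ c c' : Cfg d N, (∑ s : Cfg d N, X (mrg N s c) (mrg N s c')) = 0 := by
    intro c c'
    rw [Finset.sum_congr rfl fun s _ => by rw [hmrg c s, hmrg c' s]]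
    exact htr
  rw [Zm, hsum a b, Matrix.zero_apply, ite_self, mul_zero]

lemma Zm_herm {X : Mat d N} (hX : X.IsHermitian) (k : ℕ) : (Zm X k).IsHermitian := by
  have hXe : ∀ x y, star (X y x) = X x y := fun x y => by
    conv_rhs => rw [← hX]
    rw [Matrix.conjTranspose_apply]
  funext a b
  rw [Matrix.conjTranspose_apply]
  show star (Zm X k b a) = Zm X k a b
  by_cases hc : ∀ j : Fin N, (j : ℕ) < k → a j = b j
  · have hc' : ∀ j : Fin N, (j : ℕ) < k → b j = a j := fun j hj => (hc j hj).symm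
    rw [Zm, Zm, if_pos hc, if_pos hc', star_mul', star_sum]
    rw [show star ((((d : ℂ) ^ N))⁻¹) = (((d : ℂ) ^ N))⁻¹ from by simp]
    congr 1
    exact Finset.sum_congr rfl fun s _ => hXe _ _
  · have hc' : ¬ ∀ j : Fin N, (j : ℕ) < k → b j = a j := fun hh => hc fun j hj => (hh j hj).symm
    rw [Zm, Zm, if_neg hc, if_neg hc']
    simp

def updEquiv {d N : ℕ} (i : Fin N) : (Fin d × Cfg d N) ≃ (Fin d × Cfg d N) where
  toFun p := (p.2 i, Function.update p.2 i p.1)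
  invFun p := (p.2 i, Function.update p.2 i p.1)
  left_inv p := by
    refine Prod.ext ?_ ?_ <;> simp [Function.update_idem]
  right_inv p := by
    refine Prod.ext ?_ ?_ <;> simp [Function.update_idem]

lemma ptrace_Zm_succ {d N : ℕ} [NeZero d] (X : Mat d N) (i : Fin N) :
    ptrace i (Zm X ((i : ℕ) + 1)) = ptrace i (Zm X (i : ℕ)) := by
  funext a b
  have hne_of_lt : ∀ j : Fin N, (j : ℕ) < (i : ℕ) → j ≠ i := by
    intro j hj hji
    rw [hji] at hj
    exact lt_irrefl _ hj
  have hCk : ∀ s : Fin d,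
      (∀ j : Fin N, (j : ℕ) < (i : ℕ) → ins i a s j = ins i b s j) ↔
      (∀ j : Fin N, (j : ℕ) < (i : ℕ) → ins i a 0 j = ins i b 0 j) := by
    intro s
    apply forall_congr'
    intro j
    by_cases hj : (j : ℕ) < (i : ℕ)
    · have hne := hne_of_lt j hj
      simp [ins, dif_neg hne]
    · simp [hj]
  have hCk1 : ∀ s : Fin d,
      (∀ j : Fin N, (j : ℕ) < (i : ℕ) + 1 → ins i a s j = ins i b s j) ↔
      (∀ j : Fin N, (j : ℕ) < (i : ℕ) → ins i a 0 j = ins i b 0 j) := by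
    intro s
    constructor
    · intro H j hj
      have hne := hne_of_lt j hj
      have h2 := H j (Nat.lt_succ_of_lt hj)
      simp only [ins, dif_neg hne] at h2 ⊢
      exact h2
    · intro H j hj
      by_cases hji : j = i
      · subst hji; simp [ins]
      · have hjk : (j : ℕ) < (i : ℕ) := by
          have hv : (j : ℕ) ≠ (i : ℕ) := fun hh => hji (Fin.ext hh)
          omega
        have := H j hjk
        simp only [ins, dif_neg hji] at this ⊢
        exact this
  have hmrg1 : ∀ (t : Cfg d N) (s : Fin d),
      mrg ((i : ℕ) + 1) t (ins i a s) = mrg ((i : ℕ) + 1) t (ins i a 0) ∧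
      mrg ((i : ℕ) + 1) t (ins i b s) = mrg ((i : ℕ) + 1) t (ins i b 0) := by
    intro t s
    constructor <;> (funext j; by_cases hj : (j : ℕ) < (i : ℕ) + 1)
    · simp [mrg, hj]
    · have hne : j ≠ i := fun hh => hj (by rw [hh]; omega)
      simp [mrg, hj, ins, dif_neg hne]
    · simp [mrg, hj]
    · have hne : j ≠ i := fun hh => hj (by rw [hh]; omega)
      simp [mrg, hj, ins, dif_neg hne]
  have hmrg2 : ∀ (c : {j : Fin N // j ≠ i} → Fin d) (t : Cfg d N) (s : Fin d),
      mrg (i : ℕ) t (ins i c s) = mrg ((i : ℕ) + 1) (Function.update t i s) (ins i c 0) := by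
    intro c t s
    funext j
    rcases Nat.lt_trichotomy (j : ℕ) (i : ℕ) with hj | hj | hj
    · have hne := hne_of_lt j hj
      simp [mrg, hj, Nat.lt_succ_of_lt hj, Function.update_of_ne hne]
    · have hji : j = i := Fin.ext hj
      subst hji
      simp [mrg, hj, ins]
    · have h1 : ¬ (j : ℕ) < (i : ℕ) := by omega
      have h2 : ¬ (j : ℕ) < (i : ℕ) + 1 := by omega
      have hne : j ≠ i := fun hh => h1 (by rw [hh] at hj ⊢; omega)
      simp [mrg, h1, h2, ins, dif_neg hne]
  show (∑ s : Fin d, Zm X ((i : ℕ) + 1) (ins i a s) (ins i b s))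
      = ∑ s : Fin d, Zm X (i : ℕ) (ins i a s) (ins i b s)
  by_cases hC : ∀ j : Fin N, (j : ℕ) < (i : ℕ) → ins i a 0 j = ins i b 0 j
  · have hL : ∀ s : Fin d, Zm X ((i : ℕ) + 1) (ins i a s) (ins i b s)
        = ((d : ℂ) ^ N)⁻¹ * ∑ t : Cfg d N,
            X (mrg ((i : ℕ) + 1) t (ins i a 0)) (mrg ((i : ℕ) + 1) t (ins i b 0)) := by
      intro s
      rw [Zm, if_pos ((hCk1 s).mpr hC)]
      congr 1
      exact Finset.sum_congr rfl fun t _ => by rw [(hmrg1 t s).1, (hmrg1 t s).2]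
    have hR : ∀ s : Fin d, Zm X (i : ℕ) (ins i a s) (ins i b s)
        = ((d : ℂ) ^ N)⁻¹ * ∑ t : Cfg d N,
            X (mrg ((i : ℕ) + 1) (Function.update t i s) (ins i a 0))
              (mrg ((i : ℕ) + 1) (Function.update t i s) (ins i b 0)) := by
      intro s
      rw [Zm, if_pos ((hCk s).mpr hC)]
      congr 1
      exact Finset.sum_congr rfl fun t _ => by rw [hmrg2 a t s, hmrg2 b t s]
    rw [Finset.sum_congr rfl fun s _ => hL s, Finset.sum_congr rfl fun s _ => hR s]
    rw [← Finset.mul_sum, ← Finset.mul_sum]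
    congr 1
    have hre : (∑ s : Fin d, ∑ t : Cfg d N,
        X (mrg ((i : ℕ) + 1) (Function.update t i s) (ins i a 0))
          (mrg ((i : ℕ) + 1) (Function.update t i s) (ins i b 0)))
        = ∑ p : Fin d × Cfg d N,
            X (mrg ((i : ℕ) + 1) ((updEquiv i p).2) (ins i a 0))
              (mrg ((i : ℕ) + 1) ((updEquiv i p).2) (ins i b 0)) := by
      rw [Fintype.sum_prod_type]
      rfl
    rw [hre, Equiv.sum_comp (updEquiv (d := d) i)
      (fun p => X (mrg ((i : ℕ) + 1) p.2 (ins i a 0)) (mrg ((i : ℕ) + 1) p.2 (ins i b 0))),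
      Fintype.sum_prod_type]
  · have hL : ∀ s : Fin d, Zm X ((i : ℕ) + 1) (ins i a s) (ins i b s) = 0 := by
      intro s
      rw [Zm, if_neg (fun hh => hC ((hCk1 s).mp hh)), mul_zero]
    have hR : ∀ s : Fin d, Zm X (i : ℕ) (ins i a s) (ins i b s) = 0 := by
      intro s
      rw [Zm, if_neg (fun hh => hC ((hCk s).mp hh)), mul_zero]
    rw [Finset.sum_congr rfl fun s _ => hL s, Finset.sum_congr rfl fun s _ => hR s]

lemma exists_decomp {d N : ℕ} [NeZero d] {X : Mat d N} (hX : X.IsHermitian)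
    (htr : X.trace = 0) :
    ∃ Y : Fin N → Mat d N, (∀ i, (Y i).IsHermitian) ∧ (∀ i, ptrace i (Y i) = 0) ∧
      X = ∑ i, Y i := by
  refine ⟨fun i => Zm X (i : ℕ) - Zm X ((i : ℕ) + 1), fun i => ?_, fun i => ?_, ?_⟩
  · exact (Zm_herm hX _).sub (Zm_herm hX _)
  · have hsub : ptrace i (Zm X (i : ℕ) - Zm X ((i : ℕ) + 1))
        = ptrace i (Zm X (i : ℕ)) - ptrace i (Zm X ((i : ℕ) + 1)) := by
      funext a b
      simp [ptrace, Matrix.sub_apply, Finset.sum_sub_distrib]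
    rw [hsub, ptrace_Zm_succ, sub_self]
  · rw [show (∑ i : Fin N, (Zm X (i : ℕ) - Zm X ((i : ℕ) + 1))) = Zm X 0 - Zm X N from by
      rw [Fin.sum_univ_eq_sum_range (fun k => Zm X k - Zm X (k + 1)) N]
      exact Finset.sum_range_sub' (fun k => Zm X k) N]
    rw [Zm_zero (NeZero.ne d) X, Zm_top htr, sub_zero]

end Zm

lemma ptraceLast_herm {d m n : ℕ} {X : Mat d (m + n)} (h : X.IsHermitian) :
    (ptraceLast X).IsHermitian := by
  rw [ptraceLast_eq_ptE]; exact ptE_herm h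

lemma ptraceFirst_herm {d m n : ℕ} {X : Mat d (m + n)} (h : X.IsHermitian) :
    (ptraceFirst X).IsHermitian := by
  rw [ptraceFirst_eq_ptE]; exact ptE_herm h

lemma ptraceLast_traceNorm_le {d m n : ℕ} {X : Mat d (m + n)} (h : X.IsHermitian) :
    traceNorm (ptraceLast X) ≤ traceNorm X := by
  rw [ptraceLast_eq_ptE]; exact ptE_traceNorm_le _ h

lemma ptraceFirst_traceNorm_le {d m n : ℕ} {X : Mat d (m + n)} (h : X.IsHermitian) :
    traceNorm (ptraceFirst X) ≤ traceNorm X := by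
  rw [ptraceFirst_eq_ptE]; exact ptE_traceNorm_le _ h

lemma W1Set_bddBelow {d n : ℕ} (X : Mat d n) : BddBelow (W1Set X) := by
  refine ⟨0, fun r hr => ?_⟩
  obtain ⟨Y, _, _, _, rfl⟩ := hr
  apply mul_nonneg (by norm_num)
  exact Finset.sum_nonneg fun i _ => traceNorm_nonneg _

lemma W1_superadd {d m n : ℕ} (hd : 2 ≤ d) (X : Mat d (m + n)) (hX : X.IsHermitian)
    (hXtr : X.trace = 0) : W1 (ptraceLast X) + W1 (ptraceFirst X) ≤ W1 X := by
  haveI : NeZero d := ⟨by omega⟩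
  obtain ⟨Y0, hY0h, hY0tr, hY0sum⟩ := exists_decomp hX hXtr
  have hne : (W1Set X).Nonempty := ⟨_, Y0, hY0h, hY0tr, hY0sum, rfl⟩
  apply le_csInf hne
  rintro r ⟨Y, hYh, hYtr, hsum, rfl⟩
  have hsplit : ∀ Z : Mat d (m + n), Z = ∑ i, Y i →
      ptraceLast Z = ∑ i : Fin m, ptraceLast (Y (Fin.castAdd n i)) ∧
      ptraceFirst Z = ∑ j : Fin n, ptraceFirst (Y (Fin.natAdd m j)) := by
    intro Z hZ
    constructor
    · rw [hZ, show ptraceLast (∑ i, Y i) = ∑ i : Fin (m + n), ptraceLast (Y i) from by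
        simp only [ptraceLast_eq_ptE]; exact ptE_sum _ _ _, Fin.sum_univ_add,
        Finset.sum_eq_zero (fun j _ => ptraceLast_zero (hYtr _)), add_zero]
    · rw [hZ, show ptraceFirst (∑ i, Y i) = ∑ i : Fin (m + n), ptraceFirst (Y i) from by
        simp only [ptraceFirst_eq_ptE]; exact ptE_sum _ _ _, Fin.sum_univ_add,
        Finset.sum_eq_zero (fun j _ => ptraceFirst_zero (hYtr _)), zero_add]
  have hA : W1 (ptraceLast X)
      ≤ (1 / 2) * ∑ i : Fin m, traceNorm (ptraceLast (Y (Fin.castAdd n i))) := by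
    apply csInf_le (W1Set_bddBelow _)
    exact ⟨fun i => ptraceLast (Y (Fin.castAdd n i)),
      fun i => ptraceLast_herm (hYh _),
      fun i => ptrace_ptraceLast_zero (hYtr _),
      (hsplit X hsum).1, rfl⟩
  have hB : W1 (ptraceFirst X)
      ≤ (1 / 2) * ∑ j : Fin n, traceNorm (ptraceFirst (Y (Fin.natAdd m j))) := by
    apply csInf_le (W1Set_bddBelow _)
    exact ⟨fun j => ptraceFirst (Y (Fin.natAdd m j)),
      fun j => ptraceFirst_herm (hYh _),
      fun j => ptrace_ptraceFirst_zero (hYtr _),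
      (hsplit X hsum).2, rfl⟩
  have hc1 : ∀ i : Fin m, traceNorm (ptraceLast (Y (Fin.castAdd n i)))
      ≤ traceNorm (Y (Fin.castAdd n i)) := fun i => ptraceLast_traceNorm_le (hYh _)
  have hc2 : ∀ j : Fin n, traceNorm (ptraceFirst (Y (Fin.natAdd m j)))
      ≤ traceNorm (Y (Fin.natAdd m j)) := fun j => ptraceFirst_traceNorm_le (hYh _)
  calc W1 (ptraceLast X) + W1 (ptraceFirst X)
      ≤ (1 / 2) * (∑ i : Fin m, traceNorm (ptraceLast (Y (Fin.castAdd n i))))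
        + (1 / 2) * ∑ j : Fin n, traceNorm (ptraceFirst (Y (Fin.natAdd m j))) :=
        add_le_add hA hB
    _ ≤ (1 / 2) * (∑ i : Fin m, traceNorm (Y (Fin.castAdd n i)))
        + (1 / 2) * ∑ j : Fin n, traceNorm (Y (Fin.natAdd m j)) :=
        add_le_add
          (mul_le_mul_of_nonneg_left (Finset.sum_le_sum fun i _ => hc1 i) (by norm_num))
          (mul_le_mul_of_nonneg_left (Finset.sum_le_sum fun j _ => hc2 j) (by norm_num))
    _ = (1 / 2) * ∑ i : Fin (m + n), traceNorm (Y i) := by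
        rw [← mul_add]
        congr 1
        exact (Fin.sum_univ_add (f := fun i => traceNorm (Y i))).symm


theorem stmt1 {d m n : ℕ} (hd : 2 ≤ d) (hm : 1 ≤ m) (hn : 1 ≤ n)
    (X : Mat d (m + n)) (hX : X.IsHermitian) (hXtr : X.trace = 0) :
    W1 (ptraceLast X) + W1 (ptraceFirst X) ≤ W1 X ∧
    ∀ ρ σ : Mat d (m + n), IsState ρ → IsState σ →
      W1 (ptraceLast (ρ - σ)) + W1 (ptraceFirst (ρ - σ)) ≤ W1 (ρ - σ) := by
  constructor
  · exact W1_superadd hd X hX hXtr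
  · intro ρ σ hρ hσ
    exact W1_superadd hd _ (hρ.1.1.sub hσ.1.1)
      (by rw [Matrix.trace_sub, hρ.2, hσ.2, sub_self])

end QW1
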